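/- Let q be a prime power, d ≥ 1, m ≥ 1, and let X_1, …, X_m be pairwise disjoint subsets of F_q^d whose union is F_q^d. Call a tuple (A, B_1, …, B_m) of subsets of F_q^d × F_q consistent if A, B_1, …, B_m are pairwise disjoint with union F_q^d × F_q, the complement of A is a transversal hyperplane T(a,b), and for every k the shifted projection satisfies π[B_k] + a = X_k (where π[B_k] + a = {π(w) + a : w ∈ B_k}). Then the map sending a pair (a,b) ∈ F_q^d × F_q to the tuple with A = (F_q^d × F_q) ∖ T(a,b) and B_k = {(y − a, a·(y − a) + b) : y ∈ X_k} is a bijection onto the set of consistent tuples; in particular the number of consistent tuples is exactly q^{d+1}. -/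

import Mathlib

set_option autoImplicit false

/-- The transversal hyperplane `T(a,b)`: the graph of `x ↦ a·x + b`
inside `F_q^d × F_q`. -/
def Thyp {F : Type} [Field F] {d : ℕ} (a : Fin d → F) (b : F) :
    Set ((Fin d → F) × F) :=
  {p | p.2 = (∑ i, a i * p.1 i) + b}

/-- A tuple `(A, B_1, …, B_m)` of subsets of `F_q^d × F_q` is *consistent*
(with the announcements `X_1, …, X_m`) if its sets are pairwise disjoint with
union everything, the complement of `A` is a transversal hyperplane `T(a,b)`,
and the shifted projection of each `B_k` is `X_k`, i.e. `π[B_k] + a = X_k`. -/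
def Consistent {F : Type} [Field F] {d m : ℕ} (X : Fin m → Set (Fin d → F))
    (t : Set ((Fin d → F) × F) × (Fin m → Set ((Fin d → F) × F))) : Prop :=
  (∀ k, Disjoint t.1 (t.2 k)) ∧
  (Pairwise fun j k => Disjoint (t.2 j) (t.2 k)) ∧
  (t.1 ∪ (⋃ k, t.2 k)) = Set.univ ∧
  ∃ a b, t.1ᶜ = Thyp a b ∧
    ∀ k, (fun w : (Fin d → F) × F => w.1 + a) '' (t.2 k) = X k

section aux
variable {F : Type} [Field F] {d : ℕ}

lemma Thyp_inj {a a' : Fin d → F} {b b' : F} (h : Thyp a b = Thyp a' b') :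
    a = a' ∧ b = b' := by
  have hb : b = b' := by
    have h0 : ((0 : Fin d → F), b) ∈ Thyp a b := by simp [Thyp]
    rw [h] at h0
    simpa [Thyp] using h0
  refine ⟨funext fun i => ?_, hb⟩
  have h1 : ((Pi.single i (1:F) : Fin d → F), a i + b) ∈ Thyp a b := by
    simp [Thyp, Pi.single_apply, mul_ite, Finset.sum_ite_eq']
  rw [h] at h1
  have h2 : a i + b = a' i + b := by
    simpa [Thyp, Pi.single_apply, mul_ite, Finset.sum_ite_eq', hb] using h1
  exact add_right_cancel h2

lemma mem_img {a : Fin d → F} {b : F} {X : Set (Fin d → F)} {w : (Fin d → F) × F} :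
    w ∈ (fun y : Fin d → F =>
        ((y - a, (∑ i, a i * (y - a) i) + b) : (Fin d → F) × F)) '' X ↔
      w ∈ Thyp a b ∧ w.1 + a ∈ X := by
  constructor
  · rintro ⟨y, hy, rfl⟩
    exact ⟨rfl, by simpa [sub_add_cancel] using hy⟩
  · rintro ⟨hw, hy⟩
    refine ⟨w.1 + a, hy, ?_⟩
    have h : w.1 + a - a = w.1 := by abel
    show (w.1 + a - a, (∑ i, a i * (w.1 + a - a) i) + b) = w
    rw [h]
    exact Prod.ext rfl hw.symm

end aux

/-- The map sending `(a,b)` to the tuple `(A, B_1, …, B_m)` with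
`A = (T(a,b))ᶜ` and `B_k = μ_{T(a,b)}[X_k]` is a bijection from `F_q^d × F_q`
onto the set of consistent tuples; in particular there are exactly `q^(d+1)`
consistent tuples. -/
theorem consistent_tuples_bijection (q d m : ℕ) (hq : IsPrimePow q) (hd : 1 ≤ d) (hm : 1 ≤ m)
    (F : Type) [Field F] [Fintype F] (hF : Fintype.card F = q)
    (X : Fin m → Set (Fin d → F))
    (hXdisj : Pairwise fun j k => Disjoint (X j) (X k))
    (hXcov : (⋃ k, X k) = Set.univ) :
    Set.BijOn
      (fun ab : (Fin d → F) × F =>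
        (((Thyp ab.1 ab.2)ᶜ : Set ((Fin d → F) × F)),
          fun k => (fun y : Fin d → F =>
            ((y - ab.1, (∑ i, ab.1 i * (y - ab.1) i) + ab.2) : (Fin d → F) × F)) '' X k))
      Set.univ {t | Consistent X t} ∧
    {t : Set ((Fin d → F) × F) × (Fin m → Set ((Fin d → F) × F)) |
        Consistent X t}.ncard = q ^ (d + 1) := by
  set f := fun ab : (Fin d → F) × F =>
      (((Thyp ab.1 ab.2)ᶜ : Set ((Fin d → F) × F)),
        fun k => (fun y : Fin d → F =>
          ((y - ab.1, (∑ i, ab.1 i * (y - ab.1) i) + ab.2) : (Fin d → F) × F)) '' X k)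
    with hf
  have hbij : Set.BijOn f Set.univ {t | Consistent X t} := by
    refine ⟨?_, ?_, ?_⟩
    · -- MapsTo
      rintro ⟨a, b⟩ -
      refine ⟨?_, ?_, ?_, a, b, ?_, ?_⟩
      · intro k
        rw [Set.disjoint_left]
        intro w hw hw'
        exact hw (mem_img.mp hw').1
      · intro j k hjk
        rw [Set.disjoint_left]
        intro w hw hw'
        exact Set.disjoint_left.mp (hXdisj hjk) (mem_img.mp hw).2 (mem_img.mp hw').2
      · ext w
        simp only [Set.mem_union, Set.mem_iUnion, Set.mem_compl_iff, Set.mem_univ, iff_true]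
        by_cases hw : w ∈ Thyp a b
        · right
          have : w.1 + a ∈ ⋃ k, X k := hXcov ▸ Set.mem_univ _
          obtain ⟨k, hk⟩ := Set.mem_iUnion.mp this
          exact ⟨k, mem_img.mpr ⟨hw, hk⟩⟩
        · exact Or.inl hw
      · exact compl_compl _
      · intro k
        ext y
        constructor
        · rintro ⟨w, hw, rfl⟩
          exact (mem_img.mp hw).2
        · intro hy
          refine ⟨(y - a, (∑ i, a i * (y - a) i) + b), ⟨y, hy, rfl⟩, ?_⟩
          show y - a + a = y
          abel
    · -- InjOn
      rintro ⟨a, b⟩ - ⟨a', b'⟩ - heq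
      have h1 : (Thyp a b)ᶜ = (Thyp a' b')ᶜ := congrArg Prod.fst heq
      have h2 : Thyp a b = Thyp a' b' := by
        rw [← compl_compl (Thyp a b), h1, compl_compl]
      obtain ⟨ha, hb⟩ := Thyp_inj h2
      exact Prod.ext ha hb
    · -- SurjOn
      rintro ⟨A, B⟩ ⟨hdA, hdB, hcov, a, b, hA, hX⟩
      have hAe : A = (Thyp a b)ᶜ := by rw [← hA, compl_compl]
      have hBsub : ∀ k, B k ⊆ Thyp a b := by
        intro k w hw
        have := Set.disjoint_left.mp (hdA k)
        by_contra hc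
        have hwA : w ∈ A := by
          rw [hAe]; exact hc
        exact this hwA hw
      have hBe : ∀ k, B k = (fun y : Fin d → F =>
          ((y - a, (∑ i, a i * (y - a) i) + b) : (Fin d → F) × F)) '' X k := by
        intro k
        ext w
        rw [mem_img]
        constructor
        · intro hw
          exact ⟨hBsub k hw, (hX k) ▸ ⟨w, hw, rfl⟩⟩
        · rintro ⟨hw, hy⟩
          rw [← hX k] at hy
          obtain ⟨v, hv, hveq⟩ := hy
          have h1 : v.1 = w.1 := add_right_cancel hveq
          have h2 : v.2 = w.2 := by
            have hvT := hBsub k hv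
            simp only [Thyp, Set.mem_setOf_eq] at hvT hw
            rw [hvT, hw, h1]
          have : v = w := Prod.ext h1 h2
          rwa [← this]
      exact ⟨(a, b), Set.mem_univ _, by
        simp only [hf]
        exact Prod.ext hAe.symm (funext fun k => (hBe k).symm)⟩
  refine ⟨hbij, ?_⟩
  have himg : f '' Set.univ = {t | Consistent X t} := hbij.image_eq
  rw [← himg, Set.ncard_image_of_injOn hbij.injOn, Set.ncard_univ]
  simp [Nat.card_eq_fintype_card, Fintype.card_prod, Fintype.card_fun, hF, pow_succ]
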